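/- arXiv:1709.02726 — 2 statements merged into one kernel-verified Lean document; each statement's English description precedes it below -/
import Mathlib

section
/- (Optimization margin for FTRL) Let g ∈ H, let r : H → ℝ∪{±∞} be proper and directionally differentiable with domain S, let X ⊂ H be convex with X ∩ S nonempty, and suppose x⁺ ∈ argmin_{x∈X} ⟨g,x⟩ + r(x) is attained. Then for any x ∈ X ∩ S: +∞ > ⟨g, x − x⁺⟩ + r(x) − r(x⁺) ≥ B_r(x, x⁺). -/
open Filter Topology

variable {H : Type*} [NormedAddCommGroup H] [InnerProductSpace ℝ H]

/-- `d ∈ [-∞,+∞]` is the directional derivative of `f` at `x` in direction `z`. -/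
def HasDirDeriv (f : H → EReal) (x z : H) (d : EReal) : Prop :=
  Tendsto (fun α : ℝ => (f (x + α • z) - f x) * ((α⁻¹ : ℝ) : EReal)) (𝓝[>] (0:ℝ)) (𝓝 d)

/-- Generalized Bregman divergence `B_f(y,x)` given the directional derivative value `d`. -/
noncomputable def breg (f : H → EReal) (y x : H) (d : EReal) : EReal :=
  if f y ≠ ⊤ ∧ f y ≠ ⊥ then f y - f x - d else ⊤

/-- Optimization margin for FTRL: if `x⁺` minimizes `⟨g,·⟩ + r` over a convex set `X`
(with `X ∩ dom r ≠ ∅`), then for any `x ∈ X ∩ dom r`,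
`+∞ > ⟨g, x - x⁺⟩ + r(x) - r(x⁺) ≥ B_r(x, x⁺)`. -/
theorem stmt4 (g : H) (r : H → EReal)
    (hproper : (∃ u, r u ≠ ⊤) ∧ ∀ u, r u ≠ ⊥)
    (Dr : H → H → EReal)
    (hDr : ∀ u z, r u ≠ ⊤ → HasDirDeriv r u z (Dr u z))
    (X : Set H) (hX : Convex ℝ X) (hne : ∃ u ∈ X, r u ≠ ⊤)
    (xp : H) (hxpX : xp ∈ X)
    (hmin : ∀ u ∈ X, ((inner ℝ g xp : ℝ) : EReal) + r xp ≤ ((inner ℝ g u : ℝ) : EReal) + r u)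
    (x : H) (hxX : x ∈ X) (hx : r x ≠ ⊤) :
    ((inner ℝ g (x - xp) : ℝ) : EReal) + r x - r xp < ⊤ ∧
      breg r x xp (Dr xp (x - xp)) ≤ ((inner ℝ g (x - xp) : ℝ) : EReal) + r x - r xp := by
  obtain ⟨u0, hu0X, hu0⟩ := hne
  have hbotxp := hproper.2 xp
  have hbotx := hproper.2 x
  -- r xp ≠ ⊤
  have hxpne : r xp ≠ ⊤ := by
    intro h
    have h1 := hmin u0 hu0X
    rw [h] at h1
    have hu0r : r u0 = ((r u0).toReal : EReal) := (EReal.coe_toReal hu0 (hproper.2 u0)).symm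
    rw [hu0r, EReal.coe_add_top, ← EReal.coe_add, top_le_iff] at h1
    exact (EReal.coe_ne_top _) h1
  set a := (r x).toReal with ha
  set b := (r xp).toReal with hb
  have hrx : r x = (a : EReal) := (EReal.coe_toReal hx hbotx).symm
  have hrxp : r xp = (b : EReal) := (EReal.coe_toReal hxpne hbotxp).symm
  set c : ℝ := inner ℝ g (x - xp) with hc
  -- key: Dr xp (x - xp) ≥ -c
  have hkey : ((-c : ℝ) : EReal) ≤ Dr xp (x - xp) := by
    apply ge_of_tendsto (hDr xp (x - xp) hxpne)
    filter_upwards [Ioc_mem_nhdsGT_of_mem (by norm_num : (0:ℝ) ∈ Set.Ico 0 1)] with α hα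
    obtain ⟨hα0, hα1⟩ := hα
    have hmem : xp + α • (x - xp) ∈ X := by
      have := hX hxpX hxX (by linarith : (0:ℝ) ≤ 1 - α) hα0.le (by ring)
      convert this using 1
      rw [smul_sub, sub_smul, one_smul]; abel
    have h1 := hmin _ hmem
    have hin : (inner ℝ g (xp + α • (x - xp)) : ℝ) = inner ℝ g xp + α * c := by
      rw [inner_add_right, inner_smul_right]
    rw [hin, hrxp] at h1
    by_cases htop : r (xp + α • (x - xp)) = ⊤
    · rw [htop, hrxp]
      rw [EReal.top_sub_coe]
      rw [EReal.top_mul_coe_of_pos (by positivity)]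
      exact le_top
    · have hv : r (xp + α • (x - xp)) = (((r _).toReal : ℝ) : EReal) :=
        (EReal.coe_toReal htop (hproper.2 _)).symm
      set v := (r (xp + α • (x - xp))).toReal
      rw [hv] at h1 ⊢
      rw [hrxp]
      rw [← EReal.coe_add, ← EReal.coe_add] at h1
      have h2 : (inner ℝ g xp : ℝ) + b ≤ inner ℝ g xp + α * c + v := EReal.coe_le_coe_iff.mp h1
      rw [← EReal.coe_sub, ← EReal.coe_mul, EReal.coe_le_coe_iff]
      have h3 : -(α * c) * α⁻¹ ≤ (v - b) * α⁻¹ :=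
        mul_le_mul_of_nonneg_right (by linarith) (by positivity)
      have h4 : -(α * c) * α⁻¹ = -c := by
        field_simp
      linarith
  constructor
  · rw [hrx, hrxp, ← EReal.coe_add, ← EReal.coe_sub]
    exact EReal.coe_lt_top _
  · rw [breg, if_pos ⟨hx, hbotx⟩, hrx, hrxp]
    have hdbot : Dr xp (x - xp) ≠ ⊥ := fun h => by
      rw [h] at hkey; exact (EReal.bot_lt_coe _).not_ge hkey
    by_cases hdtop : Dr xp (x - xp) = ⊤
    · rw [hdtop]
      rw [← EReal.coe_sub, EReal.sub_top]
      exact bot_le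
    · have hd : Dr xp (x - xp) = ((Dr xp (x - xp)).toReal : EReal) :=
        (EReal.coe_toReal hdtop hdbot).symm
      set e := (Dr xp (x - xp)).toReal
      rw [hd] at hkey ⊢
      have he : -c ≤ e := EReal.coe_le_coe_iff.mp hkey
      rw [← EReal.coe_sub, ← EReal.coe_sub, ← EReal.coe_add, ← EReal.coe_sub,
        EReal.coe_le_coe_iff]
      linarith
end

section
/- (Mirror descent margin) Let X ⊂ H be convex, g ∈ H, let r : H → ℝ∪{±∞} be proper and directionally differentiable with domain S, and let y ∈ S ∩ X be such that r'(y; · − y) is real-valued and linear on S: r'(y; x−y) = ⟨v, x−y⟩ for some v ∈ H and all x ∈ S. Let q : H → ℝ∪{±∞} be proper and directionally differentiable with S ∩ X ∩ dom(q) nonempty, and suppose x⁺ ∈ argmin_{x∈X} ⟨g,x⟩ + q(x) + B_r(x,y) exists with finite optimal value. Then for any x ∈ S ∩ X ∩ dom(q): +∞ > ⟨g, x − x⁺⟩ + q(x) − q(x⁺) + B_r(x,y) − B_r(x⁺,y) ≥ B_{r+q}(x, x⁺). -/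
open Filter Topology

variable {H : Type*} [NormedAddCommGroup H] [InnerProductSpace ℝ H]

/-- Mirror-descent margin: if `x⁺` minimizes `⟨g,·⟩ + q + B_r(·,y)` over the convex set `X`
with finite optimal value, and `r'(y; · - y)` is linear (`= ⟨v, · - y⟩`) on `dom r`, then for
any `x ∈ dom r ∩ X ∩ dom q`,
`+∞ > ⟨g, x - x⁺⟩ + q(x) - q(x⁺) + B_r(x,y) - B_r(x⁺,y) ≥ B_{r+q}(x, x⁺)`. -/
theorem stmt16 (X : Set H) (hX : Convex ℝ X) (g : H)
    (r : H → EReal) (hr_proper : (∃ u, r u ≠ ⊤) ∧ ∀ u, r u ≠ ⊥)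
    (Dr : H → H → EReal) (hDr : ∀ u z, r u ≠ ⊤ → HasDirDeriv r u z (Dr u z))
    (y : H) (hyS : r y ≠ ⊤) (hyX : y ∈ X)
    (v : H) (hlin : ∀ u : H, r u ≠ ⊤ → Dr y (u - y) = ((inner ℝ v (u - y) : ℝ) : EReal))
    (q : H → EReal) (hq_proper : (∃ u, q u ≠ ⊤) ∧ ∀ u, q u ≠ ⊥)
    (Dq : H → H → EReal) (hDq : ∀ u z, q u ≠ ⊤ → HasDirDeriv q u z (Dq u z))
    (Drq : H → H → EReal)
    (hDrq : ∀ u z, r u + q u ≠ ⊤ → HasDirDeriv (fun w => r w + q w) u z (Drq u z))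
    (hSq : ∃ u ∈ X, r u ≠ ⊤ ∧ q u ≠ ⊤)
    (xp : H) (hxpX : xp ∈ X)
    (hxp_fin : ((inner ℝ g xp : ℝ) : EReal) + q xp + breg r xp y (Dr y (xp - y)) ≠ ⊤ ∧
        ((inner ℝ g xp : ℝ) : EReal) + q xp + breg r xp y (Dr y (xp - y)) ≠ ⊥)
    (hmin : ∀ u ∈ X,
      ((inner ℝ g xp : ℝ) : EReal) + q xp + breg r xp y (Dr y (xp - y))
        ≤ ((inner ℝ g u : ℝ) : EReal) + q u + breg r u y (Dr y (u - y)))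
    (x : H) (hxX : x ∈ X) (hxr : r x ≠ ⊤) (hxq : q x ≠ ⊤) :
    ((inner ℝ g (x - xp) : ℝ) : EReal) + q x - q xp
        + breg r x y (Dr y (x - y)) - breg r xp y (Dr y (xp - y)) < ⊤ ∧
      breg (fun w => r w + q w) x xp (Drq xp (x - xp))
        ≤ ((inner ℝ g (x - xp) : ℝ) : EReal) + q x - q xp
          + breg r x y (Dr y (x - y)) - breg r xp y (Dr y (xp - y)) := by

  classical
  obtain ⟨hfT, hfB⟩ := hxp_fin
  have hex : ∀ z : EReal, z ≠ ⊤ → z ≠ ⊥ → ∃ a : ℝ, z = a := fun z h1 h2 => by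
    lift z to ℝ using ⟨h1, h2⟩; exact ⟨z, rfl⟩
  obtain ⟨ry, hry⟩ := hex (r y) hyS (hr_proper.2 y)
  obtain ⟨rx, hrxv⟩ := hex (r x) hxr (hr_proper.2 x)
  obtain ⟨qx, hqxv⟩ := hex (q x) hxq (hq_proper.2 x)
  have h1 : ((inner ℝ g xp : ℝ) : EReal) + q xp ≠ ⊥ := by
    intro hb
    rcases EReal.add_eq_bot_iff.mp hb with h | h
    · exact EReal.coe_ne_bot _ h
    · exact hq_proper.2 xp h
  have hrxp : r xp ≠ ⊤ := by
    intro h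
    apply hfT
    have hb : breg r xp y (Dr y (xp - y)) = ⊤ := by simp [breg, h]
    rw [hb, EReal.add_top_of_ne_bot h1]
  obtain ⟨rxp, hrxpv⟩ := hex (r xp) hrxp (hr_proper.2 xp)
  have hDxp : Dr y (xp - y) = ((inner ℝ v (xp - y) : ℝ) : EReal) := hlin xp hrxp
  have hDx : Dr y (x - y) = ((inner ℝ v (x - y) : ℝ) : EReal) := hlin x hxr
  have hBxp : breg r xp y (Dr y (xp - y)) = ((rxp - ry - inner ℝ v (xp - y) : ℝ) : EReal) := by
    unfold breg
    rw [if_pos ⟨hrxp, hr_proper.2 xp⟩, hrxpv, hry, hDxp]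
    norm_cast
  have hBx : breg r x y (Dr y (x - y)) = ((rx - ry - inner ℝ v (x - y) : ℝ) : EReal) := by
    unfold breg
    rw [if_pos ⟨hxr, hr_proper.2 x⟩, hrxv, hry, hDx]
    norm_cast
  have hqxp : q xp ≠ ⊤ := by
    intro h
    apply hfT
    rw [h, hBxp, EReal.add_top_of_ne_bot (EReal.coe_ne_bot _),
      EReal.top_add_of_ne_bot (EReal.coe_ne_bot _)]
  obtain ⟨qxp, hqxpv⟩ := hex (q xp) hqxp (hq_proper.2 xp)
  -- the LHS margin as a real number
  set M : ℝ := inner ℝ g (x - xp) + qx - qxp + (rx - ry - inner ℝ v (x - y))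
      - (rxp - ry - inner ℝ v (xp - y)) with hM
  have hL : ((inner ℝ g (x - xp) : ℝ) : EReal) + q x - q xp
      + breg r x y (Dr y (x - y)) - breg r xp y (Dr y (xp - y)) = (M : EReal) := by
    rw [hqxv, hqxpv, hBx, hBxp]
    norm_cast
  -- key inequality on directional derivative of r + q at xp
  have hrqxp : r xp + q xp ≠ ⊤ := by
    rw [hrxpv, hqxpv]
    norm_cast
    exact EReal.coe_ne_top _
  have hT := hDrq xp (x - xp) hrqxp
  set c : ℝ := inner ℝ v (x - xp) - inner ℝ g (x - xp) with hc
  have key : (c : EReal) ≤ Drq xp (x - xp) := by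
    refine ge_of_tendsto hT ?_
    filter_upwards [Ioc_mem_nhdsGT_of_mem (by exact ⟨le_refl (0:ℝ), one_pos⟩)] with α hα
    have hα0 : (0:ℝ) < α := hα.1
    set u : H := xp + α • (x - xp) with hu
    have huX : u ∈ X := by
      have : (1 - α) • xp + α • x ∈ X :=
        hX hxpX hxX (by linarith [hα.2]) hα0.le (by ring)
      have he : u = (1 - α) • xp + α • x := by
        rw [hu]; module
      rw [he]; exact this
    show (c : EReal) ≤ (r u + q u - (r xp + q xp)) * ((α⁻¹ : ℝ) : EReal)
    by_cases hru : r u = ⊤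
    · have : r u + q u = ⊤ := by rw [hru]; exact EReal.top_add_of_ne_bot (hq_proper.2 u)
      rw [this, hrxpv, hqxpv, ← EReal.coe_add, EReal.top_sub_coe,
        EReal.top_mul_of_pos (by exact_mod_cast inv_pos.mpr hα0)]
      exact le_top
    · by_cases hqu : q u = ⊤
      · have : r u + q u = ⊤ := by rw [hqu]; exact EReal.add_top_of_ne_bot (hr_proper.2 u)
        rw [this, hrxpv, hqxpv, ← EReal.coe_add, EReal.top_sub_coe,
          EReal.top_mul_of_pos (by exact_mod_cast inv_pos.mpr hα0)]
        exact le_top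
      · obtain ⟨ru, hruv⟩ := hex (r u) hru (hr_proper.2 u)
        obtain ⟨qu, hquv⟩ := hex (q u) hqu (hq_proper.2 u)
        have hmu := hmin u huX
        have hDu : Dr y (u - y) = ((inner ℝ v (u - y) : ℝ) : EReal) := hlin u hru
        have hBu : breg r u y (Dr y (u - y)) = ((ru - ry - inner ℝ v (u - y) : ℝ) : EReal) := by
          unfold breg
          rw [if_pos ⟨hru, hr_proper.2 u⟩, hruv, hry, hDu]
          norm_cast
        rw [hqxpv, hBxp, hquv, hBu] at hmu
        have hAB : inner ℝ g xp + qxp + (rxp - ry - inner ℝ v (xp - y))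
            ≤ inner ℝ g u + qu + (ru - ry - inner ℝ v (u - y)) := by
          exact_mod_cast hmu
        rw [hruv, hquv, hrxpv, hqxpv]
        norm_cast
        have e1 : (inner ℝ g u : ℝ) = inner ℝ g xp + α * (inner ℝ g x - inner ℝ g xp) := by
          rw [hu]
          simp [inner_add_right, real_inner_smul_right, inner_sub_right]
        have e2 : (inner ℝ v (u - y) : ℝ) = inner ℝ v xp - inner ℝ v y
            + α * (inner ℝ v x - inner ℝ v xp) := by
          rw [hu]
          simp [inner_add_right, inner_add_left, real_inner_smul_right, inner_sub_right,
            inner_sub_left]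
          ring
        have e3 : (inner ℝ v (xp - y) : ℝ) = inner ℝ v xp - inner ℝ v y := by
          simp [inner_sub_right]
        rw [e1, e2, e3] at hAB
        rw [hc]
        have hgoal : (inner ℝ v (x - xp) : ℝ) - inner ℝ g (x - xp)
            = inner ℝ v x - inner ℝ v xp - (inner ℝ g x - inner ℝ g xp) := by
          simp [inner_sub_right]
        rw [hgoal, ← div_eq_mul_inv, le_div_iff₀ hα0]
        nlinarith [hAB]
  constructor
  · rw [hL]
    exact EReal.coe_lt_top M
  · rw [hL]
    have hcond : r x + q x ≠ ⊤ ∧ r x + q x ≠ ⊥ := by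
      rw [hrxv, hqxv, ← EReal.coe_add]
      exact ⟨EReal.coe_ne_top _, EReal.coe_ne_bot _⟩
    have hB : breg (fun w => r w + q w) x xp (Drq xp (x - xp))
        = ((rx + qx - (rxp + qxp) : ℝ) : EReal) - Drq xp (x - xp) := by
      unfold breg
      rw [if_pos hcond]
      beta_reduce
      rw [hrxv, hqxv, hrxpv, hqxpv]
      norm_cast
    rw [hB]
    calc ((rx + qx - (rxp + qxp) : ℝ) : EReal) - Drq xp (x - xp)
        ≤ ((rx + qx - (rxp + qxp) : ℝ) : EReal) - (c : EReal) :=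
          EReal.sub_le_sub le_rfl key
      _ = ((rx + qx - (rxp + qxp) - c : ℝ) : EReal) := by norm_cast
      _ = (M : EReal) := by
          norm_cast
          rw [hM, hc]
          simp only [inner_sub_right]
          ring
end
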